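/- Let B be an n×n real expanding matrix and D ⊂ ℝⁿ a finite set with 0 ∈ D. Suppose the set D_∞ is not uniformly discrete, i.e. for every δ > 0 there exist x ≠ y in D_∞ with ‖x − y‖ ≤ δ. Then D⁺(μ) = ∞. -/

import Mathlib

open MeasureTheory Filter
open scoped ENNReal

/-- The upper Beurling density of a positive Borel measure on ℝⁿ. -/
noncomputable def beurlingUpper {n : ℕ} (ν : Measure (EuclideanSpace ℝ (Fin n))) : ℝ≥0∞ :=
  Filter.limsup (fun N : ℝ =>
    ⨆ z : EuclideanSpace ℝ (Fin n),
      ν {y | ∀ i, |y i - z i| ≤ N / 2} / ENNReal.ofReal (N ^ n)) Filter.atTop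

/-- The measure `μ = sup_N μ_N` associated with the pair `(B, D)`. -/
noncomputable def selfAffineMeasure {n : ℕ} (B : Matrix (Fin n) (Fin n) ℝ)
    (D : Finset (EuclideanSpace ℝ (Fin n))) : Measure (EuclideanSpace ℝ (Fin n)) :=
  ⨆ N : ℕ, Measure.sum (fun f : Fin N → D =>
    Measure.dirac (∑ j : Fin N, Matrix.toEuclideanLin (B ^ (j : ℕ)) (f j)))

/-- `D_∞ = ⋃_{k ≥ 1} D_k` where `D_k = {Σ_{j<k} B^j ℓ_j : ℓ_j ∈ D}`. -/
def Dinfty {n : ℕ} (B : Matrix (Fin n) (Fin n) ℝ)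
    (D : Finset (EuclideanSpace ℝ (Fin n))) : Set (EuclideanSpace ℝ (Fin n)) :=
  {x | ∃ k : ℕ, 1 ≤ k ∧ ∃ f : Fin k → D,
    x = ∑ j : Fin k, Matrix.toEuclideanLin (B ^ (j : ℕ)) (f j)}

section Aux

variable {n : ℕ}

/-- The point of `ℝⁿ` encoded by a digit string `f : Fin K → D`. -/
noncomputable def pt (B : Matrix (Fin n) (Fin n) ℝ) (D : Finset (EuclideanSpace ℝ (Fin n)))
    {K : ℕ} (f : Fin K → D) : EuclideanSpace ℝ (Fin n) :=
  ∑ j : Fin K, Matrix.toEuclideanLin (B ^ (j : ℕ)) (f j)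

lemma coord_abs_le (v : EuclideanSpace ℝ (Fin n)) (i : Fin n) : |v i| ≤ ‖v‖ := by
  rw [EuclideanSpace.norm_eq]
  rw [show |v i| = Real.sqrt (|v i| ^ 2) by rw [Real.sqrt_sq_eq_abs, abs_abs]]
  apply Real.sqrt_le_sqrt
  have := Finset.single_le_sum (f := fun j => ‖v j‖ ^ 2) (fun j _ => by positivity)
    (Finset.mem_univ i)
  simpa [Real.norm_eq_abs] using this

lemma box_meas (z : EuclideanSpace ℝ (Fin n)) (c : ℝ) :
    MeasurableSet {y : EuclideanSpace ℝ (Fin n) | ∀ i, |y i - z i| ≤ c} := by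
  have : {y : EuclideanSpace ℝ (Fin n) | ∀ i, |y i - z i| ≤ c} =
      ⋂ i, {y | |y i - z i| ≤ c} := by ext y; simp
  rw [this]
  refine MeasurableSet.iInter fun i => ?_
  have hc : Continuous fun y : EuclideanSpace ℝ (Fin n) => |y i - z i| := by fun_prop
  exact measurableSet_le hc.measurable measurable_const

lemma pt_pad (B : Matrix (Fin n) (Fin n) ℝ) {D : Finset (EuclideanSpace ℝ (Fin n))}
    (hD0 : (0 : EuclideanSpace ℝ (Fin n)) ∈ D) {k K : ℕ} (hkK : k ≤ K) (f : Fin k → D) :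
    pt B D (fun j : Fin K => if hj : (j : ℕ) < k then f ⟨j, hj⟩ else ⟨0, hD0⟩) = pt B D f := by
  unfold pt
  set g : ℕ → EuclideanSpace ℝ (Fin n) := fun j =>
    if hj : j < k then Matrix.toEuclideanLin (B ^ j) ((f ⟨j, hj⟩ : EuclideanSpace ℝ (Fin n))) else 0
    with hg
  rw [Fin.sum_univ_eq_sum_range (fun j : ℕ =>
      Matrix.toEuclideanLin (B ^ j) ((if hj : j < k then f ⟨j, hj⟩ else ⟨0, hD0⟩) : D))]
  have h2 : ∑ j : Fin k, Matrix.toEuclideanLin (B ^ (j : ℕ)) ((f j : EuclideanSpace ℝ (Fin n)))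
      = ∑ j ∈ Finset.range k, g j := by
    rw [← Fin.sum_univ_eq_sum_range g k]
    refine Finset.sum_congr rfl fun j _ => ?_
    simp [hg, j.isLt]
  rw [h2, ← Finset.sum_subset (Finset.range_subset_range.mpr hkK)]
  · refine Finset.sum_congr rfl fun j hj => ?_
    have hj' : j < k := Finset.mem_range.mp hj
    simp [hg, hj']
  · intro j _ hj
    have hj' : ¬ j < k := by simpa using hj
    simp [hj']

lemma pt_append (B : Matrix (Fin n) (Fin n) ℝ) (D : Finset (EuclideanSpace ℝ (Fin n)))
    {K k : ℕ} (f : Fin K → D) (g0 : Fin k → D) :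
    pt B D (Fin.append f g0) = pt B D f + Matrix.toEuclideanLin (B ^ K) (pt B D g0) := by
  unfold pt
  rw [Fin.sum_univ_add]
  congr 1
  · refine Finset.sum_congr rfl fun j _ => ?_
    simp [Fin.append_left]
  · rw [map_sum]
    refine Finset.sum_congr rfl fun j _ => ?_
    rw [Fin.append_right]
    simp only [Fin.coe_natAdd, pow_add]
    simp [Matrix.toEuclideanLin_apply, Matrix.mulVec_mulVec]

lemma exists_rep (B : Matrix (Fin n) (Fin n) ℝ) {D : Finset (EuclideanSpace ℝ (Fin n))}
    (hD0 : (0 : EuclideanSpace ℝ (Fin n)) ∈ D) {x y : EuclideanSpace ℝ (Fin n)}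
    (hx : x ∈ Dinfty B D) (hy : y ∈ Dinfty B D) :
    ∃ k : ℕ, ∃ a b : Fin k → D, x = pt B D a ∧ y = pt B D b := by
  obtain ⟨k₁, -, f₁, hf₁⟩ := hx
  obtain ⟨k₂, -, f₂, hf₂⟩ := hy
  refine ⟨max k₁ k₂,
    fun j => if hj : (j : ℕ) < k₁ then f₁ ⟨j, hj⟩ else ⟨0, hD0⟩,
    fun j => if hj : (j : ℕ) < k₂ then f₂ ⟨j, hj⟩ else ⟨0, hD0⟩, ?_, ?_⟩
  · rw [pt_pad B hD0 (le_max_left _ _) f₁]; exact hf₁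
  · rw [pt_pad B hD0 (le_max_right _ _) f₂]; exact hf₂

lemma key (B : Matrix (Fin n) (Fin n) ℝ) {D : Finset (EuclideanSpace ℝ (Fin n))}
    (hD0 : (0 : EuclideanSpace ℝ (Fin n)) ∈ D)
    (hnd : ∀ δ : ℝ, 0 < δ → ∃ x ∈ Dinfty B D, ∃ y ∈ Dinfty B D, x ≠ y ∧ ‖x - y‖ ≤ δ) :
    ∀ m : ℕ, ∀ ε : ℝ, 0 < ε → ∃ K : ℕ, ∃ g : Fin (m + 1) → (Fin K → D),
      Function.Injective g ∧ ∀ t, ‖pt B D (g t) - pt B D (g 0)‖ ≤ ε := by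
  intro m
  induction m with
  | zero =>
    intro ε hε
    exact ⟨0, fun _ => (Fin.elim0 : Fin 0 → D),
      fun s t _ => Fin.ext (by omega), fun t => by simp [hε.le]⟩
  | succ m ih =>
    intro ε hε
    obtain ⟨K, g, hginj, hgdist⟩ := ih (ε / 2) (by linarith)
    set T : EuclideanSpace ℝ (Fin n) →L[ℝ] EuclideanSpace ℝ (Fin n) :=
      LinearMap.toContinuousLinearMap (Matrix.toEuclideanLin (B ^ K)) with hT
    have hTapp : ∀ v, T v = Matrix.toEuclideanLin (B ^ K) v := fun v => rfl
    set C : ℝ := ‖T‖ with hC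
    have hCpos : 0 < 2 * (C + 1) := by positivity
    obtain ⟨x, hx, y, hy, hxy, hxyd⟩ := hnd (ε / (2 * (C + 1))) (by positivity)
    obtain ⟨k, a, b, hxa, hyb⟩ := exists_rep B hD0 hx hy
    have hab : a ≠ b := fun h => hxy (by rw [hxa, hyb, h])
    refine ⟨K + k, fun t => if ht : (t : ℕ) < m + 1
      then Fin.append (g ⟨t, ht⟩) a else Fin.append (g 0) b, ?_, ?_⟩
    · intro s t hst
      by_cases hs : (s : ℕ) < m + 1 <;> by_cases ht : (t : ℕ) < m + 1
      · simp only [dif_pos hs, dif_pos ht] at hst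
        have : g ⟨s, hs⟩ = g ⟨t, ht⟩ := by
          funext j
          have := congrFun hst (Fin.castAdd k j)
          simpa [Fin.append_left] using this
        have := hginj this
        exact Fin.ext (by simpa using congrArg Fin.val this)
      · exfalso
        simp only [dif_pos hs, dif_neg ht] at hst
        apply hab
        funext j
        have := congrFun hst (Fin.natAdd K j)
        simpa [Fin.append_right] using this
      · exfalso
        simp only [dif_neg hs, dif_pos ht] at hst
        apply hab
        funext j
        have := congrFun hst.symm (Fin.natAdd K j)
        simpa [Fin.append_right] using this
      · exact Fin.ext (by omega)
    · intro t
      have h0 : (0 : Fin (m + 2)).val < m + 1 := Nat.succ_pos m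
      have hg0 : (⟨(0 : Fin (m + 2)).val, h0⟩ : Fin (m + 1)) = 0 := rfl
      simp only [dif_pos h0, hg0]
      by_cases ht : (t : ℕ) < m + 1
      · simp only [dif_pos ht]
        rw [pt_append, pt_append, ← hxa]
        have : pt B D (g ⟨t, ht⟩) + Matrix.toEuclideanLin (B ^ K) x
            - (pt B D (g 0) + Matrix.toEuclideanLin (B ^ K) x)
            = pt B D (g ⟨t, ht⟩) - pt B D (g 0) := by abel
        rw [this]
        calc ‖pt B D (g ⟨t, ht⟩) - pt B D (g 0)‖ ≤ ε / 2 := hgdist _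
        _ ≤ ε := by linarith
      · simp only [dif_neg ht]
        rw [pt_append, pt_append, ← hxa, ← hyb]
        have : pt B D (g 0) + Matrix.toEuclideanLin (B ^ K) y
            - (pt B D (g 0) + Matrix.toEuclideanLin (B ^ K) x)
            = Matrix.toEuclideanLin (B ^ K) (y - x) := by
          rw [map_sub]; abel
        rw [this]
        have h1 : ‖Matrix.toEuclideanLin (B ^ K) (y - x)‖ ≤ C * ‖y - x‖ := by
          rw [← hTapp]; exact T.le_opNorm _
        have h2 : ‖y - x‖ ≤ ε / (2 * (C + 1)) := by
          rw [norm_sub_rev]; exact hxyd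
        have hC0 : 0 ≤ C := norm_nonneg _
        calc ‖Matrix.toEuclideanLin (B ^ K) (y - x)‖ ≤ C * (ε / (2 * (C + 1))) :=
              h1.trans (by nlinarith)
        _ ≤ ε := by
            rw [mul_comm, div_mul_eq_mul_div, div_le_iff₀ hCpos]
            nlinarith

lemma selfAffineMeasure_eq (B : Matrix (Fin n) (Fin n) ℝ)
    (D : Finset (EuclideanSpace ℝ (Fin n))) :
    selfAffineMeasure B D
      = ⨆ N : ℕ, Measure.sum (fun f : Fin N → D => Measure.dirac (pt B D f)) := rfl

lemma count_in_box (B : Matrix (Fin n) (Fin n) ℝ) {D : Finset (EuclideanSpace ℝ (Fin n))}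
    (hD0 : (0 : EuclideanSpace ℝ (Fin n)) ∈ D)
    (hnd : ∀ δ : ℝ, 0 < δ → ∃ x ∈ Dinfty B D, ∃ y ∈ Dinfty B D, x ≠ y ∧ ‖x - y‖ ≤ δ)
    (m : ℕ) {N : ℝ} (hN : 1 ≤ N) :
    ∃ z : EuclideanSpace ℝ (Fin n),
      (m : ℝ≥0∞) ≤ selfAffineMeasure B D {y | ∀ i, |y i - z i| ≤ N / 2} := by
  classical
  obtain ⟨K, g, hginj, hgdist⟩ := key B hD0 hnd m (1/2) (by norm_num)
  set z := pt B D (g 0) with hz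
  set s : Set (EuclideanSpace ℝ (Fin n)) := {y | ∀ i, |y i - z i| ≤ N / 2} with hs
  have hsm : MeasurableSet s := box_meas z (N / 2)
  have hmem : ∀ t, pt B D (g t) ∈ s := by
    intro t i
    have h1 : |pt B D (g t) i - z i| ≤ ‖pt B D (g t) - z‖ := by
      have := coord_abs_le (pt B D (g t) - z) i
      simpa using this
    have h2 : ‖pt B D (g t) - z‖ ≤ 1/2 := hgdist t
    linarith
  refine ⟨z, ?_⟩
  have hle : (Measure.sum (fun f : Fin K → D => Measure.dirac (pt B D f))) s
      ≤ selfAffineMeasure B D s := by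
    rw [selfAffineMeasure_eq]
    exact Measure.le_iff'.mp (le_iSup
      (fun N : ℕ => Measure.sum (fun f : Fin N → D => Measure.dirac (pt B D f))) K) s
  refine le_trans ?_ hle
  rw [Measure.sum_apply _ hsm]
  calc (m : ℝ≥0∞) ≤ (m + 1 : ℕ) := by exact_mod_cast Nat.cast_le.mpr (Nat.le_succ m)
  _ = ∑ t : Fin (m + 1), Measure.dirac (pt B D (g t)) s := by
      have : ∀ t : Fin (m + 1), Measure.dirac (pt B D (g t)) s = 1 := by
        intro t
        rw [Measure.dirac_apply' _ hsm, Set.indicator_of_mem (hmem t)]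
        rfl
      simp [this]
  _ = ∑ f ∈ Finset.image g Finset.univ, Measure.dirac (pt B D f) s :=
      (Finset.sum_image (g := g) (f := fun f : Fin K → D => Measure.dirac (pt B D f) s)
        (fun a _ b _ h => hginj h)).symm
  _ ≤ ∑' f : Fin K → D, Measure.dirac (pt B D f) s := ENNReal.sum_le_tsum _

end Aux

/-- **Lemma.** Let `B` be an expanding real `n×n` matrix and `D ⊆ ℝⁿ` finite with `0 ∈ D`.
If `D_∞` is not uniformly discrete (for every `δ > 0` there are `x ≠ y` in `D_∞` with
`‖x − y‖ ≤ δ`), then `D⁺(μ) = ∞`. -/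
theorem upperBeurling_top_of_not_uniformly_discrete {n : ℕ} (B : Matrix (Fin n) (Fin n) ℝ)
    (hB : ∀ μ ∈ spectrum ℂ (B.map (algebraMap ℝ ℂ)), 1 < ‖μ‖)
    (D : Finset (EuclideanSpace ℝ (Fin n))) (hD0 : (0 : EuclideanSpace ℝ (Fin n)) ∈ D)
    (hnd : ∀ δ : ℝ, 0 < δ → ∃ x ∈ Dinfty B D, ∃ y ∈ Dinfty B D, x ≠ y ∧ ‖x - y‖ ≤ δ) :
    beurlingUpper (selfAffineMeasure B D) = ⊤ := by
  unfold beurlingUpper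
  have hev : ∀ᶠ N : ℝ in atTop,
      (⨆ z : EuclideanSpace ℝ (Fin n),
        selfAffineMeasure B D {y | ∀ i, |y i - z i| ≤ N / 2} / ENNReal.ofReal (N ^ n))
      = (⊤ : ℝ≥0∞) := by
    filter_upwards [eventually_ge_atTop (1 : ℝ)] with N hN
    rw [← ENNReal.iSup_div]
    have htop : (⨆ z : EuclideanSpace ℝ (Fin n),
        selfAffineMeasure B D {y | ∀ i, |y i - z i| ≤ N / 2}) = ⊤ := by
      rw [eq_top_iff, ← ENNReal.iSup_natCast]
      refine iSup_le fun m => ?_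
      obtain ⟨z, hz⟩ := count_in_box B hD0 hnd m hN
      exact le_iSup_of_le z hz
    rw [htop]
    exact ENNReal.top_div_of_ne_top ENNReal.ofReal_ne_top
  rw [limsup_congr hev, limsup_const]
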